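/- Let β : ℝ with β ≥ 0, and define the Glauber weights γ(ν) = 1/(1 + exp(-β·ν)) for ν ∈ {-1,0,1}, and m = (γ(1) + γ(-1))/2 + γ(0). Let K : Matrix (Fin 4) (Fin 4) ℝ be the symmetric matrix K = (1/2) • !![γ(1), 0, 0, -√(γ(1)·γ(-1)); 0, m, 0, 0; 0, 0, m, 0; -√(γ(1)·γ(-1)), 0, 0, γ(-1)]. Then: (a) K is positive semidefinite; (b) the vector v = (√(γ(-1)), 0, 0, √(γ(1))) satisfies K.mulVec v = 0; and (c) for every w : Fin 4 → ℝ orthogonal to v (i.e., w ⬝ᵥ v = 0), one has w ⬝ᵥ (K.mulVec w) ≥ (1/4) · (w ⬝ᵥ w). In particular the spectral gap of the single-qubit discriminant is at least 1/4. -/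

import Mathlib

open Matrix

/-- The vectorized discriminant of the single-qubit Davies generator with Glauber
weights is PSD, annihilates the purified Gibbs vector, and has spectral gap at
least `1/4` on the orthogonal complement of that vector. -/
theorem single_qubit_discriminant_gap (β : ℝ) (hβ : 0 ≤ β)
    (γ : ℝ → ℝ) (hγ : ∀ ν : ℝ, γ ν = 1 / (1 + Real.exp (-β * ν)))
    (m : ℝ) (hm : m = (γ 1 + γ (-1)) / 2 + γ 0)
    (K : Matrix (Fin 4) (Fin 4) ℝ)
    (hK : K = (1 / 2 : ℝ) •
      !![γ 1, 0, 0, -Real.sqrt (γ 1 * γ (-1));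
         0, m, 0, 0;
         0, 0, m, 0;
         -Real.sqrt (γ 1 * γ (-1)), 0, 0, γ (-1)])
    (v : Fin 4 → ℝ) (hv : v = ![Real.sqrt (γ (-1)), 0, 0, Real.sqrt (γ 1)]) :
    K.PosSemidef ∧ K.mulVec v = 0 ∧
      ∀ w : Fin 4 → ℝ, w ⬝ᵥ v = 0 → w ⬝ᵥ K.mulVec w ≥ (1 / 4) * (w ⬝ᵥ w) := by
  have hpos : ∀ ν : ℝ, 0 < 1 + Real.exp (-β * ν) := fun ν => by positivity
  have ha : 0 ≤ γ 1 := by rw [hγ]; positivity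
  have hb : 0 ≤ γ (-1) := by rw [hγ]; positivity
  have hab : γ 1 + γ (-1) = 1 := by
    rw [hγ, hγ]
    have h1 := (hpos 1).ne'
    have h2 := (hpos (-1)).ne'
    field_simp
    have e1 : Real.exp (-β) * Real.exp β = 1 := by
      rw [← Real.exp_add]; simp
    nlinarith [e1]
  have hm1 : m = 1 := by
    have h0 : γ 0 = 1 / 2 := by rw [hγ]; norm_num
    rw [hm, h0, hab]; norm_num
  have hs : Real.sqrt (γ 1 * γ (-1)) = Real.sqrt (γ 1) * Real.sqrt (γ (-1)) :=
    Real.sqrt_mul ha _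
  have sa2 : Real.sqrt (γ 1) ^ 2 = γ 1 := Real.sq_sqrt ha
  have sb2 : Real.sqrt (γ (-1)) ^ 2 = γ (-1) := Real.sq_sqrt hb
  have hquad : ∀ x : Fin 4 → ℝ, x ⬝ᵥ K.mulVec x =
      1 / 2 * (γ 1 * x 0 ^ 2 + m * x 1 ^ 2 + m * x 2 ^ 2 + γ (-1) * x 3 ^ 2
        - 2 * (Real.sqrt (γ 1) * Real.sqrt (γ (-1))) * (x 0 * x 3)) := by
    intro x
    rw [hK]
    simp [Matrix.mulVec, dotProduct, Fin.sum_univ_four, Matrix.vecHead,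
      Matrix.vecTail, hs]
    ring
  refine ⟨Matrix.PosSemidef.of_dotProduct_mulVec_nonneg ?_ ?_, ?_, ?_⟩
  · rw [Matrix.IsHermitian, hK]
    ext i j
    fin_cases i <;> fin_cases j <;>
      simp [Matrix.conjTranspose_apply, Matrix.vecHead, Matrix.vecTail]
  · intro x
    rw [star_trivial, hquad, hm1]
    nlinarith [sq_nonneg (Real.sqrt (γ 1) * x 0 - Real.sqrt (γ (-1)) * x 3),
      sq_nonneg (x 1), sq_nonneg (x 2), sa2, sb2]
  · rw [hK, hv]
    funext i
    fin_cases i <;>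
      simp [Matrix.mulVec, dotProduct, Fin.sum_univ_four, Matrix.vecHead,
        Matrix.vecTail, hs] <;>
      first
        | linear_combination (-(1:ℝ)/2 * Real.sqrt (γ (-1))) * sa2
        | linear_combination (-(1:ℝ)/2 * Real.sqrt (γ 1)) * sb2
        | linear_combination ((1:ℝ)/2 * Real.sqrt (γ (-1))) * sa2
        | linear_combination ((1:ℝ)/2 * Real.sqrt (γ 1)) * sb2
        | linear_combination (-(1:ℝ) * Real.sqrt (γ 1)) * sb2
        | linear_combination (-(1:ℝ) * Real.sqrt (γ (-1))) * sa2
        | linear_combination Real.sqrt (γ (-1)) * sa2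
        | linear_combination Real.sqrt (γ 1) * sb2
  · intro w hw
    rw [hv] at hw
    simp [dotProduct, Fin.sum_univ_four, Matrix.vecHead,
      Matrix.vecTail] at hw
    have key : Real.sqrt (γ 1) * Real.sqrt (γ (-1)) * (w 0 * w 3) * 2
        = -(γ (-1) * w 0 ^ 2 + γ 1 * w 3 ^ 2) := by
      linear_combination (w 0 * Real.sqrt (γ (-1)) + w 3 * Real.sqrt (γ 1)) * hw
        - w 0 ^ 2 * sb2 - w 3 ^ 2 * sa2
    rw [hquad, hm1]
    have hww : w ⬝ᵥ w = w 0 ^ 2 + w 1 ^ 2 + w 2 ^ 2 + w 3 ^ 2 := by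
      simp [dotProduct, Fin.sum_univ_four]; ring
    rw [hww]
    nlinarith [key, hab, sq_nonneg (w 0), sq_nonneg (w 1), sq_nonneg (w 2),
      sq_nonneg (w 3)]
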